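/- For every ξ ∈ H, the map T → ℓ²(I), t ↦ ψ_t(ξ) = (ξ_i(t))_{i∈I}, is continuous (with respect to the norm topology of ℓ²(I)). -/

import Mathlib

open scoped ComplexOrder

noncomputable section

abbrev ell2 (I : Type*) : Type _ := lp (fun _ : I => ℂ) 2

/-- `n`-th singular value of an operator: distance to operators of rank `< n`. -/
def sval {F : Type*} [NormedAddCommGroup F] [InnerProductSpace ℂ F] (n : ℕ)
    (a : F →L[ℂ] F) : ℝ :=
  sInf {r : ℝ | ∃ b : F →L[ℂ] F,
    Module.rank ℂ (LinearMap.range (b : F →ₗ[ℂ] F)) < n ∧ r = ‖a - b‖}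

/-- rank one operator `z ↦ ⟨z, y⟩ • x` (inner product linear in the first variable). -/
def rankOne {F : Type*} [NormedAddCommGroup F] [InnerProductSpace ℂ F] (x y : F) :
    F →L[ℂ] F :=
  (ContinuousLinearMap.toSpanSingleton ℂ x).comp ((innerSL ℂ) y)

variable {T I : Type*} [TopologicalSpace T] [CompactSpace T] [T2Space T]

/-- membership in the Hilbert right `C(T,ℂ)`-module `H = ⊕_i p_i E`. -/
def MemH (p : I → C(T, ℂ)) (ξ : I → C(T, ℂ)) : Prop :=
  (∀ i, p i * ξ i = ξ i) ∧ Summable fun i => star (ξ i) * ξ i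

/-- the `E`-valued inner product of `H`, `⟨ξ, η⟩ = ∑ i, η i * * ξ i`. -/
def hinner (ξ η : I → C(T, ℂ)) : C(T, ℂ) := ∑' i, star (η i) * ξ i

/-- the norm of `H`. -/
def hnorm (ξ : I → C(T, ℂ)) : ℝ := Real.sqrt ‖hinner ξ ξ‖

/-- adjointable operators on `H`, i.e. the elements of `L_E(H)`. -/
structure Adjointable (p : I → C(T, ℂ)) where
  toFun : (I → C(T, ℂ)) → (I → C(T, ℂ))
  adj : (I → C(T, ℂ)) → (I → C(T, ℂ))
  mem' : ∀ ξ, MemH p ξ → MemH p (toFun ξ)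
  adj_mem' : ∀ ξ, MemH p ξ → MemH p (adj ξ)
  map_add' : ∀ ξ η, MemH p ξ → MemH p η → toFun (ξ + η) = toFun ξ + toFun η
  map_smul' : ∀ (x : C(T, ℂ)) ξ, MemH p ξ →
    toFun (fun i => ξ i * x) = fun i => toFun ξ i * x
  bound' : ∃ C : ℝ, ∀ ξ, MemH p ξ → hnorm (toFun ξ) ≤ C * hnorm ξ
  inner_adj' : ∀ ξ η, MemH p ξ → MemH p η → hinner (toFun ξ) η = hinner ξ (adj η)

/-- `a : ℓ²(I) → ℓ²(I)` represents `φ_t u := ψ_t ∘ u ∘ ψ`. -/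
def Represents (p : I → C(T, ℂ)) (t : T)
    (u : (I → C(T, ℂ)) → (I → C(T, ℂ))) (a : ell2 I →L[ℂ] ell2 I) : Prop :=
  ∀ ζ : ell2 I, ∀ i : I, (a ζ : ∀ _ : I, ℂ) i = u (fun j => ((ζ : ∀ _ : I, ℂ) j) • p j) i t

/-- membership in `K(H)`: uniform approximation, on the unit ball of `H`, by finite sums of
rank one module operators. -/
def CompactH (p : I → C(T, ℂ)) (u : (I → C(T, ℂ)) → (I → C(T, ℂ))) : Prop :=
  ∀ ε : ℝ, 0 < ε → ∃ (m : ℕ) (ξs ηs : Fin m → (I → C(T, ℂ))),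
    (∀ k, MemH p (ξs k) ∧ MemH p (ηs k)) ∧
    ∀ ζ, MemH p ζ → hnorm ζ ≤ 1 →
      hnorm (fun i => u ζ i - ∑ k, ξs k i * hinner ζ (ηs k)) ≤ ε

/-- `u ∈ L^p(E,H)`, expressed through a family `A` of representatives of the `φ_t u`:
the family `(θ_n(u)^p)ₙ` is summable in `E`. -/
def InLp {I : Type*} (pp : ℝ) (A : T → (ell2 I →L[ℂ] ell2 I)) : Prop :=
  ∃ Θ : ℕ → C(T, ℝ), (∀ n t, Θ n t = sval (n + 1) (A t) ^ pp) ∧ Summable Θ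

/-- the norm `‖u‖_p = ‖∑ₙ θ_n(u)^p‖^(1/p)`. -/
def pnorm {I : Type*} (pp : ℝ) (A : T → (ell2 I →L[ℂ] ell2 I)) : ℝ :=
  (⨆ t : T, ∑' n : ℕ, sval (n + 1) (A t) ^ pp) ^ (1 / pp)

/-- the operator norm of an element of `L_E(H)`. -/
def opNormH (p : I → C(T, ℂ)) (u : Adjointable p) : ℝ :=
  ⨆ ξ : {ξ : I → C(T, ℂ) // MemH p ξ ∧ hnorm ξ ≤ 1}, hnorm (u.toFun ξ)

end

/-- For every `ξ ∈ H`, the map `T → ℓ²(I)`, `t ↦ ψ_t ξ = (ξ i t)_{i ∈ I}`,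
is continuous (for the norm topology of `ℓ²(I)`). -/
theorem stmt0 {T I : Type*} [TopologicalSpace T] [CompactSpace T] [T2Space T]
    (p : I → C(T, ℂ)) (hp : ∀ i t, p i t = 0 ∨ p i t = 1)
    (ξ : I → C(T, ℂ)) (hξ : MemH p ξ)
    (f : T → ell2 I) (hf : ∀ (t : T) (i : I), (f t : ∀ _ : I, ℂ) i = ξ i t) :
    Continuous f := by
  classical
  rw [continuous_iff_continuousAt]
  intro t₀
  rw [ContinuousAt, Metric.tendsto_nhds]
  intro ε hε
  set δ : ℝ := ε ^ 2 / 8 with hδdef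
  have hδ : 0 < δ := by positivity
  have h2 : (0:ℝ) < (2 : ENNReal).toReal := by norm_num
  -- summability of `i ↦ ‖ξ i t‖ ^ 2` for each `t`
  have hsum : ∀ t : T, Summable fun i => ‖ξ i t‖ ^ 2 := by
    intro t
    have h := lp.memℓp (f t)
    rw [memℓp_gen_iff h2] at h
    have : (fun i => ‖(f t : ∀ _ : I, ℂ) i‖ ^ (2 : ENNReal).toReal)
        = fun i => ‖ξ i t‖ ^ 2 := by
      funext i
      rw [hf t i]
      norm_num [Real.rpow_natCast]
    rwa [this] at h
  -- find a finite set outside of which the module inner products are uniformly small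
  obtain ⟨F, hF⟩ := (summable_iff_vanishing.mp hξ.2) (Metric.ball 0 δ)
    (Metric.ball_mem_nhds 0 hδ)
  -- uniform smallness of tails, pointwise
  have key : ∀ (t : T) (G : Finset I), Disjoint G F → ∑ i ∈ G, ‖ξ i t‖ ^ 2 ≤ δ := by
    intro t G hG
    have h1 := hF G hG
    rw [Metric.mem_ball, dist_zero_right] at h1
    have h2' : ‖(∑ i ∈ G, star (ξ i) * ξ i) t‖ ≤ ‖∑ i ∈ G, star (ξ i) * ξ i‖ :=
      ContinuousMap.norm_coe_le_norm _ t
    have h3 : ((∑ i ∈ G, star (ξ i) * ξ i) t : ℂ)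
        = ((∑ i ∈ G, ‖ξ i t‖ ^ 2 : ℝ) : ℂ) := by
      push_cast
      rw [ContinuousMap.sum_apply]
      refine Finset.sum_congr rfl fun i _ => ?_
      simp only [ContinuousMap.mul_apply, ContinuousMap.star_apply]
      rw [Complex.star_def, ← Complex.normSq_eq_conj_mul_self]
      rw [Complex.normSq_eq_norm_sq]
      push_cast
      ring
    rw [h3] at h2'
    have h4 : ‖((∑ i ∈ G, ‖ξ i t‖ ^ 2 : ℝ) : ℂ)‖ = ∑ i ∈ G, ‖ξ i t‖ ^ 2 := by
      rw [Complex.norm_real, Real.norm_eq_abs, abs_of_nonneg]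
      exact Finset.sum_nonneg fun i _ => sq_nonneg _
    rw [h4] at h2'
    exact h2'.trans h1.le
  -- the difference estimate
  have keyd : ∀ t : T, (∑' i, ‖ξ i t - ξ i t₀‖ ^ 2)
      ≤ (∑ i ∈ F, ‖ξ i t - ξ i t₀‖ ^ 2) + 4 * δ := by
    intro t
    have hsd : Summable fun i => ‖ξ i t - ξ i t₀‖ ^ 2 := by
      apply Summable.of_nonneg_of_le (fun i => sq_nonneg _)
        (fun i => ?_) (((hsum t).mul_left 2).add ((hsum t₀).mul_left 2))
      have h := norm_sub_le (ξ i t) (ξ i t₀)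
      nlinarith [norm_nonneg (ξ i t), norm_nonneg (ξ i t₀), norm_nonneg (ξ i t - ξ i t₀),
        sq_nonneg (‖ξ i t‖ - ‖ξ i t₀‖)]
    refine Summable.tsum_le_of_sum_le hsd fun s => ?_
    have hsplit : ∑ i ∈ s, ‖ξ i t - ξ i t₀‖ ^ 2
        = ∑ i ∈ s ∩ F, ‖ξ i t - ξ i t₀‖ ^ 2 + ∑ i ∈ s \ F, ‖ξ i t - ξ i t₀‖ ^ 2 := by
      rw [Finset.sum_inter_add_sum_sdiff]
    rw [hsplit]
    refine add_le_add ?_ ?_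
    · exact Finset.sum_le_sum_of_subset_of_nonneg Finset.inter_subset_right
        (fun i _ _ => sq_nonneg _)
    · have hdisj : Disjoint (s \ F) F := Finset.sdiff_disjoint
      calc ∑ i ∈ s \ F, ‖ξ i t - ξ i t₀‖ ^ 2
          ≤ ∑ i ∈ s \ F, (2 * ‖ξ i t‖ ^ 2 + 2 * ‖ξ i t₀‖ ^ 2) := by
            refine Finset.sum_le_sum fun i _ => ?_
            have h := norm_sub_le (ξ i t) (ξ i t₀)
            nlinarith [norm_nonneg (ξ i t), norm_nonneg (ξ i t₀), norm_nonneg (ξ i t - ξ i t₀),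
              sq_nonneg (‖ξ i t‖ - ‖ξ i t₀‖)]
        _ = 2 * ∑ i ∈ s \ F, ‖ξ i t‖ ^ 2 + 2 * ∑ i ∈ s \ F, ‖ξ i t₀‖ ^ 2 := by
            rw [Finset.sum_add_distrib, Finset.mul_sum, Finset.mul_sum]
        _ ≤ 2 * δ + 2 * δ := by
            gcongr
            · exact key t _ hdisj
            · exact key t₀ _ hdisj
        _ = 4 * δ := by ring
  -- continuity of the finite part
  have hcont : Filter.Tendsto (fun t => ∑ i ∈ F, ‖ξ i t - ξ i t₀‖ ^ 2) (nhds t₀)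
      (nhds 0) := by
    have : Filter.Tendsto (fun t => ∑ i ∈ F, ‖ξ i t - ξ i t₀‖ ^ 2) (nhds t₀)
        (nhds (∑ i ∈ F, ‖ξ i t₀ - ξ i t₀‖ ^ 2)) := by
      apply tendsto_finset_sum
      intro i _
      exact (((ξ i).continuous.tendsto t₀).sub tendsto_const_nhds).norm.pow 2
    simpa using this
  have hev : ∀ᶠ t in nhds t₀, ∑ i ∈ F, ‖ξ i t - ξ i t₀‖ ^ 2 < ε ^ 2 / 2 :=
    hcont.eventually_lt_const (by positivity)
  filter_upwards [hev] with t ht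
  rw [dist_eq_norm]
  have hnormsq : ‖f t - f t₀‖ ^ 2 = ∑' i, ‖ξ i t - ξ i t₀‖ ^ 2 := by
    have h := lp.norm_rpow_eq_tsum h2 (f t - f t₀)
    have heq : (fun i => ‖((f t - f t₀ : ell2 I) : ∀ _ : I, ℂ) i‖ ^ (2 : ENNReal).toReal)
        = fun i => ‖ξ i t - ξ i t₀‖ ^ 2 := by
      funext i
      have : ((f t - f t₀ : ell2 I) : ∀ _ : I, ℂ) i = ξ i t - ξ i t₀ := by
        rw [lp.coeFn_sub]
        simp [hf t i, hf t₀ i]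
      rw [this]
      norm_num [Real.rpow_natCast]
    rw [heq] at h
    rw [← h]
    norm_num [Real.rpow_natCast]
  have hlt : ‖f t - f t₀‖ ^ 2 < ε ^ 2 := by
    rw [hnormsq]
    calc (∑' i, ‖ξ i t - ξ i t₀‖ ^ 2)
        ≤ (∑ i ∈ F, ‖ξ i t - ξ i t₀‖ ^ 2) + 4 * δ := keyd t
      _ < ε ^ 2 / 2 + 4 * δ := by linarith
      _ = ε ^ 2 := by rw [hδdef]; ring
  exact lt_of_pow_lt_pow_left₀ 2 hε.le hlt
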